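/- Let a, b, c, d, δ, ε, ζ, λ ∈ ℝ and set a₁ = d + 2ε, a₂ = b + 2ζ, b₁ = a − b + 2(δ − ζ), b₂ = d − c + 2(ε − λ). Define F(x,y,z) = (a₁x + a₂y)z² + (b₁x + b₂y)z − (a₁x + a₂y) and the Lie–Cartan vector field X : ℝ³ → ℝ³, X(x,y,z) = (F_z, z·F_z, −(F_x + z·F_y)). Let z₀ ∈ ℝ be a root of the cubic f₁(z) = a₂z³ + (a₁ + b₂)z² + (b₁ − a₂)z − a₁. Then X(0,0,z₀) = 0, and the total derivative DX(0,0,z₀) satisfies: DX(0,0,z₀)(1, z₀, 0) = β₂(z₀)·(1, z₀, 0) and DX(0,0,z₀)(0, 0, 1) = β₃(z₀)·(0, 0, 1), where β₂(z₀) = b₁ + (2a₁ + b₂)z₀ + 2a₂z₀² and β₃(z₀) = (a₂ − b₁) − 2(a₁ + b₂)z₀ − 3a₂z₀²; moreover DX(0,0,z₀) has determinant 0, so its eigenvalues are 0, β₂(z₀) and β₃(z₀). -/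

import Mathlib

noncomputable section

/-- `F(x,y,z) = (a₁x + a₂y)z² + (b₁x + b₂y)z − (a₁x + a₂y)`. -/
def FLie (a₁ a₂ b₁ b₂ : ℝ) (p : ℝ × ℝ × ℝ) : ℝ :=
  (a₁ * p.1 + a₂ * p.2.1) * p.2.2 ^ 2 + (b₁ * p.1 + b₂ * p.2.1) * p.2.2 -
    (a₁ * p.1 + a₂ * p.2.1)

/-- The Lie–Cartan vector field `X = (F_z, z·F_z, −(F_x + z·F_y))`. -/
def XLie (a₁ a₂ b₁ b₂ : ℝ) (p : ℝ × ℝ × ℝ) : ℝ × ℝ × ℝ :=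
  (fderiv ℝ (FLie a₁ a₂ b₁ b₂) p (0, 0, 1),
   p.2.2 * fderiv ℝ (FLie a₁ a₂ b₁ b₂) p (0, 0, 1),
   -(fderiv ℝ (FLie a₁ a₂ b₁ b₂) p (1, 0, 0) +
      p.2.2 * fderiv ℝ (FLie a₁ a₂ b₁ b₂) p (0, 1, 0)))

/-! ### Auxiliary lemmas -/

def pr1 : (ℝ × ℝ × ℝ) →L[ℝ] ℝ := ContinuousLinearMap.fst ℝ ℝ (ℝ × ℝ)
def pr2 : (ℝ × ℝ × ℝ) →L[ℝ] ℝ :=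
  (ContinuousLinearMap.fst ℝ ℝ ℝ).comp (ContinuousLinearMap.snd ℝ ℝ (ℝ × ℝ))
def pr3 : (ℝ × ℝ × ℝ) →L[ℝ] ℝ :=
  (ContinuousLinearMap.snd ℝ ℝ ℝ).comp (ContinuousLinearMap.snd ℝ ℝ (ℝ × ℝ))

lemma hd1 (p : ℝ × ℝ × ℝ) : HasFDerivAt (fun q : ℝ × ℝ × ℝ => q.1) pr1 p := hasFDerivAt_fst
lemma hd2 (p : ℝ × ℝ × ℝ) : HasFDerivAt (fun q : ℝ × ℝ × ℝ => q.2.1) pr2 p :=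
  hasFDerivAt_fst.comp p hasFDerivAt_snd
lemma hd3 (p : ℝ × ℝ × ℝ) : HasFDerivAt (fun q : ℝ × ℝ × ℝ => q.2.2) pr3 p :=
  hasFDerivAt_snd.comp p hasFDerivAt_snd

lemma fderiv_FLie (a₁ a₂ b₁ b₂ : ℝ) (p v : ℝ × ℝ × ℝ) :
    fderiv ℝ (FLie a₁ a₂ b₁ b₂) p v =
      (a₁ * p.2.2 ^ 2 + b₁ * p.2.2 - a₁) * v.1 +
      (a₂ * p.2.2 ^ 2 + b₂ * p.2.2 - a₂) * v.2.1 +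
      (2 * (a₁ * p.1 + a₂ * p.2.1) * p.2.2 + (b₁ * p.1 + b₂ * p.2.1)) * v.2.2 := by
  have hf1 : HasFDerivAt (fun q : ℝ × ℝ × ℝ => a₁ * q.1 + a₂ * q.2.1)
      (a₁ • pr1 + a₂ • pr2) p := ((hd1 p).const_mul a₁).add ((hd2 p).const_mul a₂)
  have hf2 : HasFDerivAt (fun q : ℝ × ℝ × ℝ => b₁ * q.1 + b₂ * q.2.1)
      (b₁ • pr1 + b₂ • pr2) p := ((hd1 p).const_mul b₁).add ((hd2 p).const_mul b₂)
  have heq : FLie a₁ a₂ b₁ b₂ = fun q : ℝ × ℝ × ℝ =>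
      (a₁ * q.1 + a₂ * q.2.1) * (q.2.2 * q.2.2) +
        ((b₁ * q.1 + b₂ * q.2.1) * q.2.2 - (a₁ * q.1 + a₂ * q.2.1)) := by
    funext q; simp only [FLie]; ring
  have hF := (hf1.mul ((hd3 p).mul (hd3 p))).add ((hf2.mul (hd3 p)).sub hf1)
  erw [heq, hF.fderiv]
  simp [pr1, pr2, pr3, ContinuousLinearMap.add_apply, ContinuousLinearMap.sub_apply,
    ContinuousLinearMap.smul_apply, ContinuousLinearMap.comp_apply, smul_eq_mul]
  ring

lemma XLie_eq (a₁ a₂ b₁ b₂ : ℝ) : XLie a₁ a₂ b₁ b₂ = fun p : ℝ × ℝ × ℝ =>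
    ((2 * (a₁ * p.1 + a₂ * p.2.1)) * p.2.2 + (b₁ * p.1 + b₂ * p.2.1),
     p.2.2 * ((2 * (a₁ * p.1 + a₂ * p.2.1)) * p.2.2 + (b₁ * p.1 + b₂ * p.2.1)),
     -((a₁ * (p.2.2 * p.2.2) + b₁ * p.2.2 - a₁) +
        p.2.2 * (a₂ * (p.2.2 * p.2.2) + b₂ * p.2.2 - a₂))) := by
  funext p
  simp only [XLie, fderiv_FLie]
  refine Prod.ext ?_ (Prod.ext ?_ ?_) <;> (norm_num; try ring)

lemma fderiv_XLie_apply (a₁ a₂ b₁ b₂ z₀ : ℝ) (v : ℝ × ℝ × ℝ) :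
    fderiv ℝ (XLie a₁ a₂ b₁ b₂) (0, 0, z₀) v =
      ((2 * a₁ * z₀ + b₁) * v.1 + (2 * a₂ * z₀ + b₂) * v.2.1,
       z₀ * ((2 * a₁ * z₀ + b₁) * v.1 + (2 * a₂ * z₀ + b₂) * v.2.1),
       ((a₂ - b₁) - 2 * (a₁ + b₂) * z₀ - 3 * a₂ * z₀ ^ 2) * v.2.2) := by
  set q : ℝ × ℝ × ℝ := (0, 0, z₀) with hq
  have hf1 : HasFDerivAt (fun p : ℝ × ℝ × ℝ => a₁ * p.1 + a₂ * p.2.1)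
      (a₁ • pr1 + a₂ • pr2) q := ((hd1 q).const_mul a₁).add ((hd2 q).const_mul a₂)
  have hf2 : HasFDerivAt (fun p : ℝ × ℝ × ℝ => b₁ * p.1 + b₂ * p.2.1)
      (b₁ • pr1 + b₂ • pr2) q := ((hd1 q).const_mul b₁).add ((hd2 q).const_mul b₂)
  have hA := ((hf1.const_mul 2).mul (hd3 q)).add hf2
  have hB := (hd3 q).mul (((hf1.const_mul 2).mul (hd3 q)).add hf2)
  have hP := (((((hd3 q).mul (hd3 q)).const_mul a₁).add ((hd3 q).const_mul b₁)).sub_const a₁)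
  have hQ := (((((hd3 q).mul (hd3 q)).const_mul a₂).add ((hd3 q).const_mul b₂)).sub_const a₂)
  have hC := (hP.add ((hd3 q).mul hQ)).neg
  have hX := hA.prodMk (hB.prodMk hC)
  erw [XLie_eq, hX.fderiv]
  simp [q, pr1, pr2, pr3, ContinuousLinearMap.add_apply, ContinuousLinearMap.sub_apply,
    ContinuousLinearMap.smul_apply, ContinuousLinearMap.comp_apply, smul_eq_mul,
    ContinuousLinearMap.prod_apply, Prod.mk.injEq]
  refine ⟨by ring, by ring, by ring⟩

theorem stmt10 (a b c d δ ε ζ lam : ℝ)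
    (a₁ a₂ b₁ b₂ : ℝ)
    (ha₁ : a₁ = d + 2 * ε) (ha₂ : a₂ = b + 2 * ζ)
    (hb₁ : b₁ = a - b + 2 * (δ - ζ)) (hb₂ : b₂ = d - c + 2 * (ε - lam))
    (z₀ : ℝ)
    (hroot : a₂ * z₀ ^ 3 + (a₁ + b₂) * z₀ ^ 2 + (b₁ - a₂) * z₀ - a₁ = 0) :
    XLie a₁ a₂ b₁ b₂ (0, 0, z₀) = 0 ∧
    fderiv ℝ (XLie a₁ a₂ b₁ b₂) (0, 0, z₀) (1, z₀, 0) =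
      (b₁ + (2 * a₁ + b₂) * z₀ + 2 * a₂ * z₀ ^ 2) • ((1 : ℝ), z₀, (0 : ℝ)) ∧
    fderiv ℝ (XLie a₁ a₂ b₁ b₂) (0, 0, z₀) (0, 0, 1) =
      ((a₂ - b₁) - 2 * (a₁ + b₂) * z₀ - 3 * a₂ * z₀ ^ 2) • ((0 : ℝ), (0 : ℝ), (1 : ℝ)) ∧
    LinearMap.det ((fderiv ℝ (XLie a₁ a₂ b₁ b₂) (0, 0, z₀)) :
      (ℝ × ℝ × ℝ) →ₗ[ℝ] (ℝ × ℝ × ℝ)) = 0 ∧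
    (∀ μ : ℝ, Module.End.HasEigenvalue
        ((fderiv ℝ (XLie a₁ a₂ b₁ b₂) (0, 0, z₀) : (ℝ × ℝ × ℝ) →ₗ[ℝ] (ℝ × ℝ × ℝ))) μ ↔
      (μ = 0 ∨ μ = b₁ + (2 * a₁ + b₂) * z₀ + 2 * a₂ * z₀ ^ 2 ∨
        μ = (a₂ - b₁) - 2 * (a₁ + b₂) * z₀ - 3 * a₂ * z₀ ^ 2)) := by
  set L : (ℝ × ℝ × ℝ) →ₗ[ℝ] (ℝ × ℝ × ℝ) :=
    ((fderiv ℝ (XLie a₁ a₂ b₁ b₂) (0, 0, z₀)) : (ℝ × ℝ × ℝ) →ₗ[ℝ] (ℝ × ℝ × ℝ)) with hL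
  have hLv : ∀ v : ℝ × ℝ × ℝ, L v =
      ((2 * a₁ * z₀ + b₁) * v.1 + (2 * a₂ * z₀ + b₂) * v.2.1,
       z₀ * ((2 * a₁ * z₀ + b₁) * v.1 + (2 * a₂ * z₀ + b₂) * v.2.1),
       ((a₂ - b₁) - 2 * (a₁ + b₂) * z₀ - 3 * a₂ * z₀ ^ 2) * v.2.2) := by
    intro v
    simp only [hL, ContinuousLinearMap.coe_coe, fderiv_XLie_apply]
  have hker : ∃ m : ℝ × ℝ × ℝ, m ≠ 0 ∧ L m = 0 := by
    by_cases h : 2 * a₁ * z₀ + b₁ = 0 ∧ 2 * a₂ * z₀ + b₂ = 0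
    · refine ⟨(1, 0, 0), by simp [Prod.ext_iff], ?_⟩
      rw [hLv]
      simp only [Prod.mk_eq_zero]
      exact ⟨by simp [h.1, h.2], by simp [h.1, h.2], by simp⟩
    · refine ⟨(2 * a₂ * z₀ + b₂, -(2 * a₁ * z₀ + b₁), 0), ?_, ?_⟩
      · intro hm
        rw [Prod.mk_eq_zero, Prod.mk_eq_zero] at hm
        exact h ⟨neg_eq_zero.mp hm.2.1, hm.1⟩
      · rw [hLv]
        simp only [Prod.mk_eq_zero]
        exact ⟨by ring, by ring, by ring⟩
  refine ⟨?_, ?_, ?_, ?_, ?_⟩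
  · rw [XLie_eq]
    simp only [Prod.mk_eq_zero]
    exact ⟨by ring, by ring, by linear_combination -hroot⟩
  · rw [fderiv_XLie_apply]
    simp only [Prod.smul_mk, smul_eq_mul, Prod.mk.injEq]
    exact ⟨by ring, by ring, by ring⟩
  · rw [fderiv_XLie_apply]
    simp only [Prod.smul_mk, smul_eq_mul, Prod.mk.injEq]
    exact ⟨by ring, by ring, trivial⟩
  · exact ((LinearMap.hasEigenvalue_zero_tfae L).out 3 5).mpr hker
  · intro μ
    constructor
    · intro hμ
      obtain ⟨v, hv, hv0⟩ := (Submodule.ne_bot_iff _).mp (Module.End.hasEigenvalue_iff.mp hμ)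
      rw [Module.End.mem_eigenspace_iff, hLv] at hv
      obtain ⟨v1, v2, v3⟩ := v
      simp only [Prod.smul_mk, smul_eq_mul, Prod.mk.injEq] at hv
      obtain ⟨e1, e2, e3⟩ := hv
      by_cases h0 : μ = 0
      · exact Or.inl h0
      by_cases h3 : μ = (a₂ - b₁) - 2 * (a₁ + b₂) * z₀ - 3 * a₂ * z₀ ^ 2
      · exact Or.inr (Or.inr h3)
      have hv3 : v3 = 0 := by
        rcases mul_eq_zero.mp
            (show ((a₂ - b₁) - 2 * (a₁ + b₂) * z₀ - 3 * a₂ * z₀ ^ 2 - μ) * v3 = 0 by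
              linear_combination e3) with h | h
        · exact absurd (by linarith) h3
        · exact h
      have hv2 : v2 = z₀ * v1 := by
        apply mul_left_cancel₀ h0
        linear_combination z₀ * e1 - e2
      have hv1 : v1 ≠ 0 := by
        intro h
        exact hv0 (by simp [h, hv2, hv3, Prod.ext_iff])
      have hfin : (μ - (b₁ + (2 * a₁ + b₂) * z₀ + 2 * a₂ * z₀ ^ 2)) * v1 = 0 := by
        linear_combination -e1 + (2 * a₂ * z₀ + b₂) * hv2
      rcases mul_eq_zero.mp hfin with h | h
      · exact Or.inr (Or.inl (by linarith))
      · exact absurd h hv1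
    · rintro (rfl | rfl | rfl)
      · obtain ⟨m, hm0, hm⟩ := hker
        exact Module.End.hasEigenvalue_of_hasEigenvector
          ⟨Module.End.mem_eigenspace_iff.mpr (by simp [hm]), hm0⟩
      · refine Module.End.hasEigenvalue_of_hasEigenvector
          (x := ((1 : ℝ), z₀, (0 : ℝ))) ⟨Module.End.mem_eigenspace_iff.mpr ?_, by simp [Prod.ext_iff]⟩
        rw [hLv]
        simp only [Prod.smul_mk, smul_eq_mul, Prod.mk.injEq]
        exact ⟨by ring, by ring, by ring⟩
      · refine Module.End.hasEigenvalue_of_hasEigenvector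
          (x := ((0 : ℝ), (0 : ℝ), (1 : ℝ))) ⟨Module.End.mem_eigenspace_iff.mpr ?_, by simp [Prod.ext_iff]⟩
        rw [hLv]
        simp only [Prod.smul_mk, smul_eq_mul, Prod.mk.injEq]
        exact ⟨by ring, by ring, trivial⟩
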